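/- arXiv:1708.05082 — 4 statements merged into one kernel-verified Lean document; each statement's English description precedes it below -/
import Mathlib

section
/- Let A, B ≥ 0 be real numbers with A + δ/3·B > 0 (so denominators below are positive), let δ > 0, and set K = (3/(3+δ))A + (δ/(3+δ))B. Then for all t ∈ [0,1], 3A/((1-t)A + tK) + δB/((1-t)B + tK) ≤ 3 + δ, where each fraction is interpreted with the convention that if its denominator is 0 then A (resp. B) is 0 and the term is 0. -/
theorem convexity_lemma_nonneg (A B δ : ℝ) (hA : 0 ≤ A) (hB : 0 ≤ B)
    (hpos : 0 < A + δ / 3 * B) (hδ : 0 < δ)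
    (K : ℝ) (hK : K = 3 / (3 + δ) * A + δ / (3 + δ) * B)
    (t : ℝ) (ht : t ∈ Set.Icc (0 : ℝ) 1) :
    3 * A / ((1 - t) * A + t * K) + δ * B / ((1 - t) * B + t * K) ≤ 3 + δ := by
  obtain ⟨ht0, ht1⟩ := ht
  have h3δ : (0:ℝ) < 3 + δ := by linarith
  subst hK
  rcases eq_or_lt_of_le hA with hA0 | hA'
  · -- A = 0
    have hB' : 0 < B := by nlinarith
    rw [← hA0]
    have hDeq : (1 - t) * B + t * (3 / (3 + δ) * 0 + δ / (3 + δ) * B)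
        = B * (3 + δ - 3 * t) / (3 + δ) := by field_simp; ring
    rw [hDeq]
    have hD2 : 0 < B * (3 + δ - 3 * t) / (3 + δ) :=
      div_pos (mul_pos hB' (by linarith)) h3δ
    simp only [mul_zero, zero_div, zero_add]
    rw [div_le_iff₀ hD2]
    have he : (3 + δ) * (B * (3 + δ - 3 * t) / (3 + δ)) = B * (3 + δ - 3 * t) := by
      field_simp
    rw [he]
    nlinarith [mul_nonneg hB'.le (by linarith : (0:ℝ) ≤ 1 - t)]
  · rcases eq_or_lt_of_le hB with hB0 | hB'
    · -- B = 0
      rw [← hB0]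
      have hDeq : (1 - t) * A + t * (3 / (3 + δ) * A + δ / (3 + δ) * 0)
          = A * (3 + δ - δ * t) / (3 + δ) := by field_simp; ring
      rw [hDeq]
      have hD1 : 0 < A * (3 + δ - δ * t) / (3 + δ) :=
        div_pos (mul_pos hA' (by nlinarith)) h3δ
      simp only [mul_zero, zero_div, add_zero]
      rw [div_le_iff₀ hD1]
      have he : (3 + δ) * (A * (3 + δ - δ * t) / (3 + δ)) = A * (3 + δ - δ * t) := by
        field_simp
      rw [he]
      nlinarith [mul_nonneg hA'.le (mul_nonneg hδ.le (by linarith : (0:ℝ) ≤ 1 - t))]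
    · -- both positive
      have hKv : 3 / (3 + δ) * A + δ / (3 + δ) * B = (3 * A + δ * B) / (3 + δ) := by
        field_simp
      rw [hKv]
      set K := (3 * A + δ * B) / (3 + δ) with hK
      have hKpos : 0 < K := by rw [hK]; positivity
      have hD1 : 0 < (1 - t) * A + t * K := by
        rcases lt_or_ge (min A K) ((1-t)*A + t*K) with h | h
        · exact lt_of_lt_of_le (lt_min hA' hKpos) h.le
        · nlinarith [min_le_left A K, min_le_right A K, lt_min hA' hKpos]
      have hD2 : 0 < (1 - t) * B + t * K := by
        nlinarith [min_le_left B K, min_le_right B K, lt_min hB' hKpos]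
      rw [div_add_div _ _ (ne_of_gt hD1) (ne_of_gt hD2), div_le_iff₀ (mul_pos hD1 hD2)]
      have key : (3 + δ) * (((1 - t) * A + t * K) * ((1 - t) * B + t * K))
          - (3 * A * ((1 - t) * B + t * K) + ((1 - t) * A + t * K) * (δ * B))
          = 3 * δ * t * (1 - t) * (A - B) ^ 2 / (3 + δ) := by
        rw [hK]; field_simp; ring
      have hnn : 0 ≤ 3 * δ * t * (1 - t) * (A - B) ^ 2 / (3 + δ) := by
        apply div_nonneg _ h3δ.le
        have : (0:ℝ) ≤ 1 - t := by linarith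
        positivity
      linarith
end

section
/- Let Θ₁, Θ₂, Θ₃ > 0, T_tr = (Θ₁+Θ₂+Θ₃)/3, let 0 < ν < 1, 0 ≤ θ < 1, T_δ > 0, and set A_i = (1-θ)((1-ν)T_tr + νΘ_i) + θT_δ for i = 1,2,3. Then Θ₁/A₁ + Θ₂/A₂ + Θ₃/A₃ ≤ 3T_tr/((1-θ)T_tr + θT_δ). -/
lemma aux_F_theta (B c x y z : ℝ) (hB : 0 < B) (hc : 0 < c)
    (hx : 0 < x) (hy : 0 < y) (hz : 0 < z) :
    x/(B+c*x) + y/(B+c*y) + z/(B+c*z) ≤ (x+y+z)/(B+c*(x+y+z)/3) := by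
  have hax : 0 < B + c*x := by nlinarith [mul_pos hc hx]
  have hay : 0 < B + c*y := by nlinarith [mul_pos hc hy]
  have haz : 0 < B + c*z := by nlinarith [mul_pos hc hz]
  have hD : 0 < B + c*(x+y+z)/3 := by nlinarith [mul_pos hc hx, mul_pos hc hy, mul_pos hc hz]
  rw [div_add_div _ _ hax.ne' hay.ne', div_add_div _ _ (mul_pos hax hay).ne' haz.ne',
    div_le_div_iff₀ (mul_pos (mul_pos hax hay) haz) hD]
  nlinarith [mul_nonneg (mul_nonneg (mul_nonneg hB.le hc.le) hax.le) (sq_nonneg (y-z)),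
    mul_nonneg (mul_nonneg (mul_nonneg hB.le hc.le) hay.le) (sq_nonneg (x-z)),
    mul_nonneg (mul_nonneg (mul_nonneg hB.le hc.le) haz.le) (sq_nonneg (x-y))]

theorem F_theta_bound (Θ₁ Θ₂ Θ₃ : ℝ) (h1 : 0 < Θ₁) (h2 : 0 < Θ₂) (h3 : 0 < Θ₃)
    (Ttr : ℝ) (hTtr : Ttr = (Θ₁ + Θ₂ + Θ₃) / 3)
    (ν θ Tδ : ℝ) (hν : 0 < ν) (hν1 : ν < 1) (hθ : 0 ≤ θ) (hθ1 : θ < 1) (hTδ : 0 < Tδ)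
    (A₁ A₂ A₃ : ℝ)
    (hA1 : A₁ = (1 - θ) * ((1 - ν) * Ttr + ν * Θ₁) + θ * Tδ)
    (hA2 : A₂ = (1 - θ) * ((1 - ν) * Ttr + ν * Θ₂) + θ * Tδ)
    (hA3 : A₃ = (1 - θ) * ((1 - ν) * Ttr + ν * Θ₃) + θ * Tδ) :
    Θ₁ / A₁ + Θ₂ / A₂ + Θ₃ / A₃ ≤ 3 * Ttr / ((1 - θ) * Ttr + θ * Tδ) := by
  have hT : 0 < Ttr := by rw [hTtr]; linarith
  have h1θ : 0 < 1 - θ := by linarith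
  have h1ν : 0 < 1 - ν := by linarith
  have hB : 0 < (1-θ)*(1-ν)*Ttr + θ*Tδ := by
    have := mul_pos (mul_pos h1θ h1ν) hT
    have := mul_nonneg hθ hTδ.le
    linarith
  have hc : 0 < (1-θ)*ν := mul_pos h1θ hν
  have key := aux_F_theta ((1-θ)*(1-ν)*Ttr + θ*Tδ) ((1-θ)*ν) Θ₁ Θ₂ Θ₃ hB hc h1 h2 h3
  have e1 : A₁ = ((1-θ)*(1-ν)*Ttr + θ*Tδ) + ((1-θ)*ν)*Θ₁ := by rw [hA1]; ring
  have e2 : A₂ = ((1-θ)*(1-ν)*Ttr + θ*Tδ) + ((1-θ)*ν)*Θ₂ := by rw [hA2]; ring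
  have e3 : A₃ = ((1-θ)*(1-ν)*Ttr + θ*Tδ) + ((1-θ)*ν)*Θ₃ := by rw [hA3]; ring
  have eD : 3 * Ttr / ((1 - θ) * Ttr + θ * Tδ)
      = (Θ₁+Θ₂+Θ₃) / (((1-θ)*(1-ν)*Ttr + θ*Tδ) + ((1-θ)*ν)*(Θ₁+Θ₂+Θ₃)/3) := by
    rw [hTtr]; congr 1 <;> ring
  rw [e1, e2, e3, eD]
  exact key
end

section
/- Let Θ₁, Θ₂, Θ₃ > 0, T_tr = (Θ₁+Θ₂+Θ₃)/3, T_{I,δ} > 0, δ > 0, and define T_δ = (3T_tr + δT_{I,δ})/(3+δ). Let 0 < ν < 1, 0 < θ ≤ 1 (with θ < 1 so all denominators are positive, or θ = 1 where A_i = T_δ), set A_i = (1-θ)((1-ν)T_tr + νΘ_i) + θT_δ and T_θ = (1-θ)T_{I,δ} + θT_δ. Then Θ₁/A₁ + Θ₂/A₂ + Θ₃/A₃ + δT_{I,δ}/T_θ ≤ 3 + δ. -/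
lemma tangent_aux (c B x p : ℝ) (hc : 0 ≤ c) (hB : 0 < B) (hx : 0 < x) (hp : 0 < p) :
    x / (c * x + B) ≤ p / (c * p + B) + B * (x - p) / (c * p + B) ^ 2 := by
  have hd1 : 0 < c * x + B := by nlinarith
  have hd2 : 0 < c * p + B := by nlinarith
  have key : p / (c * p + B) + B * (x - p) / (c * p + B) ^ 2 - x / (c * x + B)
      = c * B * (x - p) ^ 2 / ((c * x + B) * (c * p + B) ^ 2) := by
    field_simp
    ring
  have hnn : 0 ≤ c * B * (x - p) ^ 2 / ((c * x + B) * (c * p + B) ^ 2) :=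
    div_nonneg (mul_nonneg (mul_nonneg hc hB.le) (sq_nonneg _)) (by positivity)
  linarith [key ▸ hnn]

lemma tangent_aux2 (θ Tδ u : ℝ) (hθ0 : 0 ≤ θ) (hθ : 0 ≤ 1 - θ) (hTδ : 0 < Tδ) (hu : 0 < u) :
    u / ((1 - θ) * u + θ * Tδ) ≤ 1 + θ * (u - Tδ) / Tδ := by
  have hd : 0 < (1 - θ) * u + θ * Tδ := by
    rcases le_total Tδ u with h | h
    · nlinarith [mul_nonneg hθ (sub_nonneg.2 h)]
    · nlinarith [mul_nonneg hθ0 (sub_nonneg.2 h)]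
  have e : 1 + θ * (u - Tδ) / Tδ = (Tδ + θ * (u - Tδ)) / Tδ := by field_simp
  rw [e, div_le_div_iff₀ hd hTδ]
  nlinarith [mul_nonneg (mul_nonneg hθ0 hθ) (sq_nonneg (u - Tδ))]

theorem key_remainder_ineq (Θ₁ Θ₂ Θ₃ : ℝ) (h1 : 0 < Θ₁) (h2 : 0 < Θ₂) (h3 : 0 < Θ₃)
    (Ttr : ℝ) (hTtr : Ttr = (Θ₁ + Θ₂ + Θ₃) / 3)
    (TIδ δ : ℝ) (hTIδ : 0 < TIδ) (hδ : 0 < δ)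
    (Tδ : ℝ) (hTδ : Tδ = (3 * Ttr + δ * TIδ) / (3 + δ))
    (ν θ : ℝ) (hν : 0 < ν) (hν1 : ν < 1) (hθ : 0 < θ) (hθ1 : θ ≤ 1)
    (A₁ A₂ A₃ Tθ : ℝ)
    (hA1 : A₁ = (1 - θ) * ((1 - ν) * Ttr + ν * Θ₁) + θ * Tδ)
    (hA2 : A₂ = (1 - θ) * ((1 - ν) * Ttr + ν * Θ₂) + θ * Tδ)
    (hA3 : A₃ = (1 - θ) * ((1 - ν) * Ttr + ν * Θ₃) + θ * Tδ)
    (hTθ : Tθ = (1 - θ) * TIδ + θ * Tδ) :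
    Θ₁ / A₁ + Θ₂ / A₂ + Θ₃ / A₃ + δ * TIδ / Tθ ≤ 3 + δ := by
  have hθ' : 0 ≤ 1 - θ := by linarith
  have hν' : 0 < 1 - ν := by linarith
  have hTtr0 : 0 < Ttr := by rw [hTtr]; linarith
  have h3δ : (0:ℝ) < 3 + δ := by linarith
  have hTδ0 : 0 < Tδ := by
    rw [hTδ]; apply div_pos; nlinarith; exact h3δ
  have hTd_eq : 3 * Ttr + δ * TIδ = (3 + δ) * Tδ := by
    rw [hTδ]; field_simp
  set c := (1 - θ) * ν with hcdef
  set B := (1 - θ) * ((1 - ν) * Ttr) + θ * Tδ with hBdef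
  have hc : 0 ≤ c := mul_nonneg hθ' hν.le
  have hB : 0 < B := by
    have : 0 ≤ (1 - θ) * ((1 - ν) * Ttr) := mul_nonneg hθ' (mul_nonneg hν'.le hTtr0.le)
    have := mul_pos hθ hTδ0
    rw [hBdef]; linarith
  have t1 := tangent_aux c B Θ₁ Ttr hc hB h1 hTtr0
  have t2 := tangent_aux c B Θ₂ Ttr hc hB h2 hTtr0
  have t3 := tangent_aux c B Θ₃ Ttr hc hB h3 hTtr0
  have e1 : c * Θ₁ + B = A₁ := by rw [hA1, hcdef, hBdef]; ring
  have e2 : c * Θ₂ + B = A₂ := by rw [hA2, hcdef, hBdef]; ring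
  have e3 : c * Θ₃ + B = A₃ := by rw [hA3, hcdef, hBdef]; ring
  have eP : c * Ttr + B = (1 - θ) * Ttr + θ * Tδ := by rw [hcdef, hBdef]; ring
  rw [e1, eP] at t1
  rw [e2, eP] at t2
  rw [e3, eP] at t3
  have key : B * (Θ₁ - Ttr) / ((1 - θ) * Ttr + θ * Tδ) ^ 2
      + B * (Θ₂ - Ttr) / ((1 - θ) * Ttr + θ * Tδ) ^ 2
      + B * (Θ₃ - Ttr) / ((1 - θ) * Ttr + θ * Tδ) ^ 2 = 0 := by
    rw [← add_div, ← add_div]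
    have h0 : B * (Θ₁ - Ttr) + B * (Θ₂ - Ttr) + B * (Θ₃ - Ttr) = 0 := by
      rw [hTtr]; ring
    rw [h0, zero_div]
  have s1 := tangent_aux2 θ Tδ Ttr hθ.le hθ' hTδ0 hTtr0
  have s2 := tangent_aux2 θ Tδ TIδ hθ.le hθ' hTδ0 hTIδ
  rw [← hTθ] at s2
  have s2' : δ * (TIδ / Tθ) ≤ δ * (1 + θ * (TIδ - Tδ) / Tδ) :=
    mul_le_mul_of_nonneg_left s2 hδ.le
  have key2 : 3 * (θ * (Ttr - Tδ) / Tδ) + δ * (θ * (TIδ - Tδ) / Tδ) = 0 := by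
    rw [mul_div_assoc', mul_div_assoc', ← add_div]
    have h0 : 3 * (θ * (Ttr - Tδ)) + δ * (θ * (TIδ - Tδ)) = 0 := by
      linear_combination θ * hTd_eq
    rw [h0, zero_div]
  have hgoal : δ * TIδ / Tθ = δ * (TIδ / Tθ) := by ring
  rw [hgoal]
  linarith [t1, t2, t3, key, s1, s2', key2]
end

section
/- Let δ > 0 and let 0 < t < 1, A, B > 0 with A ≠ B, K = (3A + δB)/(3+δ). Then the function F(t) = 3A/((1-t)A + tK) + δB/((1-t)B + tK) satisfies F(t) < 3 + δ for all t ∈ (0,1). -/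
theorem strict_convexity_lemma (A B δ : ℝ) (hA : 0 < A) (hB : 0 < B) (hδ : 0 < δ)
    (hAB : A ≠ B) (K : ℝ) (hK : K = (3 * A + δ * B) / (3 + δ))
    (t : ℝ) (ht : t ∈ Set.Ioo (0 : ℝ) 1) :
    3 * A / ((1 - t) * A + t * K) + δ * B / ((1 - t) * B + t * K) < 3 + δ := by
  obtain ⟨ht0, ht1⟩ := ht
  have h3δ : (0:ℝ) < 3 + δ := by linarith
  have hKpos : 0 < K := by rw [hK]; positivity
  have hD1 : 0 < (1 - t) * A + t * K := by
    have := mul_pos (by linarith : (0:ℝ) < 1 - t) hA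
    have := mul_pos ht0 hKpos
    linarith
  have hD2 : 0 < (1 - t) * B + t * K := by
    have := mul_pos (by linarith : (0:ℝ) < 1 - t) hB
    have := mul_pos ht0 hKpos
    linarith
  rw [div_add_div _ _ hD1.ne' hD2.ne', div_lt_iff₀ (by positivity)]
  have key : (3 + δ) * ((3 + δ) * (((1-t)*A+t*K)*((1-t)*B+t*K))
      - (3*A*((1-t)*B+t*K) + ((1-t)*A+t*K)*(δ*B))) = t*(1-t)*(3*δ*(A-B)^2) := by
    subst hK
    field_simp
    ring
  have hABne : A - B ≠ 0 := sub_ne_zero.mpr hAB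
  have hpos : 0 < t*(1-t)*(3*δ*(A-B)^2) := by
    have : (0:ℝ) < (A-B)^2 := by positivity
    have h1 : (0:ℝ) < 1 - t := by linarith
    positivity
  nlinarith [key, hpos, h3δ]
end
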